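/- Let f : ℝ^n → ℝ ∪ {+∞} be proper, lower semicontinuous, coercive, and uniformly quasiconvex with modulus φ on a closed convex set C ⊆ dom f. Suppose there exist q ≥ 2 and ρ_q > 0 such that φ(t) ≥ ρ_q t^q for all t ≥ 0, and let p > q. Let {x^k}_{k≥0} be a HiPPA sequence for f on C with order p and parameters γ_k ∈ (γ_min, γ_max), and let x̄ be the unique global minimizer of f on C. Then the convergence is superlinear of degree (p−1)/(q−1): there exists a constant K > 0 such that for every k ≥ 0, ‖x^{k+1} − x̄‖ ≤ K·‖x^k − x̄‖^{(p−1)/(q−1)}. -/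

import Mathlib

noncomputable section

open Set Filter

/-- `φ : [0,∞) → [0,∞]` is a modulus: increasing and vanishing only at `0`. -/
def IsModulus (φ : ℝ → EReal) : Prop :=
  (∀ ⦃s t : ℝ⦄, 0 ≤ s → s ≤ t → φ s ≤ φ t) ∧ φ 0 = 0 ∧ (∀ t : ℝ, 0 < t → 0 < φ t)

/-- `f` is uniformly quasiconvex on `C` with modulus `φ`. -/
def UnifQuasiconvexOn {E : Type*} [NormedAddCommGroup E] [NormedSpace ℝ E]
    (C : Set E) (φ : ℝ → EReal) (f : E → EReal) : Prop :=
  ∀ ⦃x⦄, x ∈ C → ∀ ⦃y⦄, y ∈ C → ∀ ⦃l : ℝ⦄, l ∈ Set.Icc (0 : ℝ) 1 →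
    f (l • x + (1 - l) • y) + ((l * (1 - l) : ℝ) : EReal) * φ ‖x - y‖ ≤ max (f x) (f y)

/-- `f(x) → +∞` as `‖x‖ → +∞`. -/
def Coercive {E : Type*} [NormedAddCommGroup E] (f : E → EReal) : Prop :=
  ∀ M : ℝ, ∃ R : ℝ, ∀ x : E, R ≤ ‖x‖ → (M : EReal) < f x

/-- The high-order proximal set `prox_{f,γ}^p(C, x) = argmin_{y ∈ C} (f(y) + (1/(pγ))‖x − y‖^p)`. -/
def HOProx {E : Type*} [NormedAddCommGroup E]
    (f : E → EReal) (C : Set E) (p γ : ℝ) (x : E) : Set E :=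
  {y | y ∈ C ∧ ∀ z ∈ C,
    f y + ((1 / (p * γ) * ‖x - y‖ ^ p : ℝ) : EReal)
      ≤ f z + ((1 / (p * γ) * ‖x - z‖ ^ p : ℝ) : EReal)}

lemma rpow_diff_le_aux {a b p : ℝ} (hb : 0 ≤ b) (hba : b ≤ a) (hp : 1 ≤ p) :
    a ^ p - b ^ p ≤ p * a ^ (p - 1) * (a - b) := by
  rcases eq_or_lt_of_le (hb.trans hba) with h | ha
  · have ha0 : a = 0 := h.symm
    have hb0 : b = 0 := le_antisymm (ha0 ▸ hba) hb
    have hp0 : p ≠ 0 := by linarith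
    simp [ha0, hb0, Real.zero_rpow hp0]
  · set s := b / a - 1 with hs_def
    have hs : -1 ≤ s := by
      have : 0 ≤ b / a := div_nonneg hb ha.le
      simp only [hs_def]; linarith
    have h1 := one_add_mul_self_le_rpow_one_add hs hp
    have hba' : 1 + s = b / a := by simp [hs_def]
    rw [hba'] at h1
    have hap : (0:ℝ) < a ^ p := Real.rpow_pos_of_pos ha p
    have h2 : (1 + p * s) * a ^ p ≤ (b / a) ^ p * a ^ p :=
      mul_le_mul_of_nonneg_right h1 hap.le
    have h3 : (b / a) ^ p * a ^ p = b ^ p := by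
      rw [Real.div_rpow hb ha.le]
      field_simp
    have hpow : a ^ p = a ^ (p - 1) * a := by
      rw [← Real.rpow_add_one ha.ne' (p - 1)]; ring_nf
    have h4 : s * a ^ p = (b - a) * a ^ (p - 1) := by
      rw [hpow]; field_simp [hs_def]; rw [hs_def, sub_mul, div_mul_cancel₀ b ha.ne']; ring
    have h5 : a ^ p + p * ((b - a) * a ^ (p - 1)) ≤ b ^ p := by
      calc a ^ p + p * ((b - a) * a ^ (p - 1)) = (1 + p * s) * a ^ p := by rw [← h4]; ring
        _ ≤ (b / a) ^ p * a ^ p := h2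
        _ = b ^ p := h3
    nlinarith [h5]

lemma div_step_aux {ρq γmin γk D E P d : ℝ} (hρq : 0 < ρq) (hγmin : 0 < γmin)
    (hγk : γmin < γk) (hd : 0 < d) (hE : 0 ≤ E) (hP : 0 < P)
    (h : ρq / 4 * (D * d) ≤ 1 / γk * (P * E) * (d / 2)) :
    D ≤ P * 2 / (γmin * ρq) * E := by
  have hγkpos : 0 < γk := hγmin.trans hγk
  have h1 : (ρq / 4 * D) * d ≤ (1 / γk * (P * E) / 2) * d := by nlinarith [h]
  have h2 : ρq / 4 * D ≤ 1 / γk * (P * E) / 2 := le_of_mul_le_mul_right h1 hd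
  have h3 : 1 / γk ≤ 1 / γmin := one_div_le_one_div_of_le hγmin hγk.le
  have h4 : 1 / γk * (P * E) ≤ 1 / γmin * (P * E) :=
    mul_le_mul_of_nonneg_right h3 (by positivity)
  have h5 : ρq * D ≤ 2 / γmin * (P * E) := by
    have e1 : 2 / γmin * (P * E) = 2 * (1 / γmin * (P * E)) := by ring
    rw [e1]; linarith
  have h6 := mul_le_mul_of_nonneg_left h5 hγmin.le
  have h7 : γmin * (2 / γmin * (P * E)) = 2 * (P * E) := by field_simp
  rw [h7] at h6
  rw [div_mul_eq_mul_div, le_div_iff₀ (mul_pos hγmin hρq)]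
  nlinarith [h6]

/-- **Superlinear convergence.**  Suppose `φ(t) ≥ ρ_q t^q` for all
`t ≥ 0`, with `q ≥ 2`, `ρ_q > 0`, and let `p > q`.  Then for a HiPPA sequence of order
`p` and the unique global minimizer `x̄`, there is `K > 0` with
`‖x^{k+1} − x̄‖ ≤ K·‖x^k − x̄‖^{(p−1)/(q−1)}` for all `k`. -/
theorem statement_19 (n : ℕ) (f : EuclideanSpace ℝ (Fin n) → EReal)
    (hproper : ∃ x, f x ≠ ⊤) (hbot : ∀ x, f x ≠ ⊥)
    (hlsc : LowerSemicontinuous f) (hcoer : Coercive f)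
    (C : Set (EuclideanSpace ℝ (Fin n)))
    (hCclosed : IsClosed C) (hCconv : Convex ℝ C)
    (hdom : ∀ x ∈ C, f x ≠ ⊤)
    (φ : ℝ → EReal) (hφ : IsModulus φ)
    (hquasi : UnifQuasiconvexOn C φ f)
    (q ρq : ℝ) (hq : 2 ≤ q) (hρq : 0 < ρq)
    (hlb : ∀ t : ℝ, 0 ≤ t → ((ρq * t ^ q : ℝ) : EReal) ≤ φ t)
    (p : ℝ) (hpq : q < p)
    (γmin γmax : ℝ) (hγmin : 0 < γmin) (hγ : γmin < γmax)
    (x : ℕ → EuclideanSpace ℝ (Fin n)) (γ : ℕ → ℝ)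
    (hx0 : x 0 ∈ C)
    (hγk : ∀ k, γ k ∈ Set.Ioo γmin γmax)
    (hstep : ∀ k, x (k + 1) ∈ HOProx f C p (γ k) (x k))
    (xb : EuclideanSpace ℝ (Fin n)) (hxbC : xb ∈ C)
    (hxbmin : ∀ y ∈ C, f xb ≤ f y)
    (hxbuniq : ∀ z ∈ C, (∀ y ∈ C, f z ≤ f y) → z = xb) :
    ∃ K : ℝ, 0 < K ∧
      ∀ k : ℕ, ‖x (k + 1) - xb‖ ≤ K * ‖x k - xb‖ ^ ((p - 1) / (q - 1)) := by
  have hp1 : (1:ℝ) < p := by linarith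
  have hp0 : (0:ℝ) < p := by linarith
  have hq1 : (0:ℝ) < q - 1 := by linarith
  have h2p : (0:ℝ) < (2:ℝ) ^ p := Real.rpow_pos_of_pos two_pos p
  have hbase : (0:ℝ) < 2 ^ p / (γmin * ρq) := by positivity
  refine ⟨(2 ^ p / (γmin * ρq)) ^ (q - 1)⁻¹, Real.rpow_pos_of_pos hbase _, fun k => ?_⟩
  set K := (2 ^ p / (γmin * ρq)) ^ (q - 1)⁻¹ with hK
  obtain ⟨hvC, hopt⟩ := hstep k
  set u := x k with hu
  set v := x (k + 1) with hv
  set γk := γ k with hγkdef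
  have hγklb : γmin < γk := (hγk k).1
  have hγkpos : 0 < γk := hγmin.trans hγklb
  set b := ‖u - v‖ with hb
  set d := ‖v - xb‖ with hd
  set e := ‖u - xb‖ with he
  have hb0 : 0 ≤ b := norm_nonneg _
  have hd0 : 0 ≤ d := norm_nonneg _
  have he0 : 0 ≤ e := norm_nonneg _
  -- finite values
  have hfv : f v = ((f v).toReal : EReal) := (EReal.coe_toReal (hdom v hvC) (hbot v)).symm
  have hfxb : f xb = ((f xb).toReal : EReal) := (EReal.coe_toReal (hdom xb hxbC) (hbot xb)).symm
  set S := (f v).toReal with hS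
  set T := (f xb).toReal with hT
  have hTS : T ≤ S := by
    have := hxbmin v hvC
    rw [hfv, hfxb] at this
    exact_mod_cast this
  have hc : (0:ℝ) < 1 / (p * γk) := by positivity
  -- Step 1 : b ≤ e
  have hbe : b ≤ e := by
    have h1 := hopt xb hxbC
    rw [hfv, hfxb] at h1
    have h1' : S + 1 / (p * γk) * b ^ p ≤ T + 1 / (p * γk) * e ^ p := by
      exact_mod_cast h1
    have hbp : b ^ p ≤ e ^ p := by
      have h2 : 1 / (p * γk) * b ^ p ≤ 1 / (p * γk) * e ^ p := by linarith
      exact (mul_le_mul_iff_right₀ hc).mp h2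
    exact (Real.rpow_le_rpow_iff hb0 he0 hp0).mp hbp
  -- the midpoint
  set z := (1/2 : ℝ) • xb + (1 - (1/2 : ℝ)) • v with hz
  have hzC : z ∈ C := hCconv hxbC hvC (by norm_num) (by norm_num) (by norm_num)
  have hfz : f z = ((f z).toReal : EReal) := (EReal.coe_toReal (hdom z hzC) (hbot z)).symm
  set R := (f z).toReal with hR
  -- quasiconvexity at lambda = 1/2
  have hquasi2 := hquasi hxbC hvC (show (1/2:ℝ) ∈ Set.Icc (0:ℝ) 1 by norm_num)
  rw [max_eq_right (hxbmin v hvC)] at hquasi2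
  have hdd : ‖xb - v‖ = d := norm_sub_rev _ _
  rw [hdd] at hquasi2
  have hphi : ((ρq * d ^ q : ℝ) : EReal) ≤ φ d := hlb d hd0
  have hcoef : (0:EReal) ≤ ((1/2 * (1 - 1/2) : ℝ) : EReal) := by norm_num
  have hq2 : f z + ((1/2 * (1 - 1/2) : ℝ) : EReal) * ((ρq * d ^ q : ℝ) : EReal) ≤ ((S:ℝ) : EReal) := by
    calc f z + ((1/2 * (1 - 1/2) : ℝ) : EReal) * ((ρq * d ^ q : ℝ) : EReal)
        ≤ f z + ((1/2 * (1 - 1/2) : ℝ) : EReal) * φ d :=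
          add_le_add_right (mul_le_mul_of_nonneg_left hphi hcoef) _
      _ ≤ f v := hquasi2
      _ = ((S:ℝ) : EReal) := hfv
  rw [hfz, ← EReal.coe_mul, ← EReal.coe_add] at hq2
  have hq2' : R + 1/2 * (1 - 1/2) * (ρq * d ^ q) ≤ S := by exact_mod_cast hq2
  -- optimality against z
  have h3 := hopt z hzC
  rw [hfv, hfz] at h3
  set A := ‖u - z‖ with hA
  have h3' : S + 1 / (p * γk) * b ^ p ≤ R + 1 / (p * γk) * A ^ p := by exact_mod_cast h3
  -- combine
  have hkey : ρq / 4 * d ^ q ≤ 1 / (p * γk) * (A ^ p - b ^ p) := by nlinarith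
  -- geometric bounds
  have hA0 : 0 ≤ A := norm_nonneg _
  have hAle : A ≤ b + d / 2 := by
    have huz : u - z = (u - v) + (1 - (1/2:ℝ)) • (v - xb) := by
      rw [hz]; module
    rw [hA, huz]
    calc ‖(u - v) + (1 - (1/2:ℝ)) • (v - xb)‖
        ≤ ‖u - v‖ + ‖(1 - (1/2:ℝ)) • (v - xb)‖ := norm_add_le _ _
      _ = b + d / 2 := by
          have h12 : ‖(1 - (1/2:ℝ)) • (v - xb)‖ = d / 2 := by
            rw [norm_smul, Real.norm_eq_abs, ← hd,
              show |1 - (1/2:ℝ)| = 1/2 by norm_num]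
            ring
          rw [h12]
  have hde : d ≤ b + e := by
    have h := dist_triangle v u xb
    rw [dist_eq_norm, dist_eq_norm, dist_eq_norm, norm_sub_rev v u] at h
    exact h
  set a := b + d / 2 with ha
  have ha0 : 0 ≤ a := by positivity
  have ha2e : a ≤ 2 * e := by simp only [ha]; linarith
  have hApa : A ^ p ≤ a ^ p := Real.rpow_le_rpow hA0 hAle hp0.le
  have hdiff : a ^ p - b ^ p ≤ p * a ^ (p - 1) * (d / 2) := by
    have h := rpow_diff_le_aux hb0 (by simp only [ha]; linarith : b ≤ a) hp1.le
    have : a - b = d / 2 := by simp only [ha]; ring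
    rwa [this] at h
  have hap1 : a ^ (p - 1) ≤ (2 * e) ^ (p - 1) :=
    Real.rpow_le_rpow ha0 ha2e (by linarith)
  have h2e : (2 * e) ^ (p - 1) = 2 ^ (p - 1) * e ^ (p - 1) :=
    Real.mul_rpow (by norm_num) he0
  -- main inequality with d
  have hfinal : ρq / 4 * d ^ q ≤ 1 / γk * (2 ^ (p - 1) * e ^ (p - 1)) * (d / 2) := by
    have step1 : ρq / 4 * d ^ q ≤ 1 / (p * γk) * (p * a ^ (p - 1) * (d / 2)) := by
      calc ρq / 4 * d ^ q ≤ 1 / (p * γk) * (A ^ p - b ^ p) := hkey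
        _ ≤ 1 / (p * γk) * (a ^ p - b ^ p) := by
            apply mul_le_mul_of_nonneg_left _ hc.le; linarith
        _ ≤ 1 / (p * γk) * (p * a ^ (p - 1) * (d / 2)) :=
            mul_le_mul_of_nonneg_left hdiff hc.le
    have hap1' : a ^ (p-1) ≤ 2 ^ (p-1) * e ^ (p-1) := h2e ▸ hap1
    have hppos := Real.rpow_nonneg ha0 (p - 1)
    calc ρq / 4 * d ^ q ≤ 1 / (p * γk) * (p * a ^ (p - 1) * (d / 2)) := step1
      _ = 1 / γk * a ^ (p - 1) * (d / 2) := by field_simp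
      _ ≤ 1 / γk * (2 ^ (p - 1) * e ^ (p - 1)) * (d / 2) := by
          apply mul_le_mul_of_nonneg_right _ (by linarith)
          exact mul_le_mul_of_nonneg_left hap1' (by positivity)
  -- case split on d
  rcases eq_or_lt_of_le hd0 with hdz | hdpos
  · rw [← hdz]
    positivity
  · have hdq : d ^ q = d ^ (q - 1) * d := by
      rw [← Real.rpow_add_one hdpos.ne' (q - 1)]; ring_nf
    have hstep2 : d ^ (q - 1) ≤ 2 ^ p / (γmin * ρq) * e ^ (p - 1) := by
      rw [hdq] at hfinal
      have h2p' : (2:ℝ) ^ p = 2 ^ (p - 1) * 2 := by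
        rw [← Real.rpow_add_one two_ne_zero (p - 1)]; ring_nf
      rw [h2p']
      exact div_step_aux hρq hγmin hγklb hdpos (Real.rpow_nonneg he0 _)
        (Real.rpow_pos_of_pos two_pos _) hfinal
    have hq1inv : (0:ℝ) ≤ (q - 1)⁻¹ := by positivity
    have hroot := Real.rpow_le_rpow (Real.rpow_nonneg hd0 _) hstep2 hq1inv
    rw [Real.rpow_rpow_inv hd0 hq1.ne'] at hroot
    calc d ≤ (2 ^ p / (γmin * ρq) * e ^ (p - 1)) ^ (q - 1)⁻¹ := hroot
      _ = K * e ^ ((p - 1) / (q - 1)) := by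
          rw [Real.mul_rpow hbase.le (Real.rpow_nonneg he0 _), hK,
            ← Real.rpow_mul he0, div_eq_mul_inv, div_eq_mul_inv]
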